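/- Let k > 1 and let D be a (q^{init}_k, v₀)-rooted {q^{leaf}}-leaf-covering deduction tree of the BVASS B_k, where v₀(d_i) = v₀(d′_i) = 0 for all i < k. Then for each node n in D whose state label is q^{init}_k and at which d_{k−1} + d′_{k−1} has some value h′ < tower(k−1), there exist two incomparable descendants n₁ and n₂ of n (neither an ancestor of the other) whose state labels are q^{loop}_k and at which the values of d_{k−1} + d′_{k−1} are at most h′ + 1. -/
import Mathlib


/-- An alternating branching VASS with full zero tests (ABVASS₀):
states `Q`, counters indexed by `ι`, with unary, fork, split, and
full-zero-test rules. -/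
structure ABVASS (Q ι : Type) where
  Tu : Set (Q × (ι → ℤ) × Q)
  Tf : Set (Q × Q × Q)
  Ts : Set (Q × Q × Q)
  Tz : Set (Q × Q)

/-- Configurations: a state together with a vector of naturals. -/
abbrev Config (Q ι : Type) := Q × (ι → ℕ)

/-- Finite deduction trees labelled by configurations, with unary and
binary internal nodes. -/
inductive DTree (Q ι : Type) where
  | leaf : Config Q ι → DTree Q ι
  | node1 : Config Q ι → DTree Q ι → DTree Q ι
  | node2 : Config Q ι → DTree Q ι → DTree Q ι → DTree Q ι

namespace DTree

variable {Q ι : Type}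

/-- The root label of a deduction tree. -/
def root : DTree Q ι → Config Q ι
  | .leaf c => c
  | .node1 c _ => c
  | .node2 c _ _ => c

/-- Height: the maximum number of edges from the root to a leaf. -/
def height : DTree Q ι → ℕ
  | .leaf _ => 0
  | .node1 _ t => t.height + 1
  | .node2 _ t₁ t₂ => max t₁.height t₂.height + 1

/-- The list of leaf labels. -/
def leaves : DTree Q ι → List (Config Q ι)
  | .leaf c => [c]
  | .node1 _ t => t.leaves
  | .node2 _ t₁ t₂ => t₁.leaves ++ t₂.leaves

end DTree

variable {Q ι : Type}

/-- Unary rule, applied top-down: from `(q, v)` derive `(q₁, v + u)`,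
provided `v + u` is non-negative. -/
def UnaryStep (A : ABVASS Q ι) (c c' : Config Q ι) : Prop :=
  ∃ u, (c.1, u, c'.1) ∈ A.Tu ∧ ∀ i, (c'.2 i : ℤ) = (c.2 i : ℤ) + u i

/-- Full zero test: from `(q, 0)` derive `(q₁, 0)`. -/
def ZeroStep (A : ABVASS Q ι) (c c' : Config Q ι) : Prop :=
  (c.1, c'.1) ∈ A.Tz ∧ c.2 = (fun _ => 0) ∧ c'.2 = (fun _ => 0)

/-- Fork (children copy the parent's vector) or split (the parent's
vector is a sum of the children's). -/
def BinStep (A : ABVASS Q ι) (c c₁ c₂ : Config Q ι) : Prop :=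
  ((c.1, c₁.1, c₂.1) ∈ A.Tf ∧ c₁.2 = c.2 ∧ c₂.2 = c.2) ∨
  ((c.1, c₁.1, c₂.1) ∈ A.Ts ∧ c.2 = c₁.2 + c₂.2)

/-- A tree is a valid deduction tree when every internal node's children
are obtained by one of the permitted steps. -/
inductive ValidTree (step1 : Config Q ι → Config Q ι → Prop)
    (step2 : Config Q ι → Config Q ι → Config Q ι → Prop) : DTree Q ι → Prop
  | leaf (c : Config Q ι) : ValidTree step1 step2 (.leaf c)
  | one {c : Config Q ι} {t : DTree Q ι} :
      step1 c t.root → ValidTree step1 step2 t → ValidTree step1 step2 (.node1 c t)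
  | two {c : Config Q ι} {t₁ t₂ : DTree Q ι} :
      step2 c t₁.root t₂.root → ValidTree step1 step2 t₁ → ValidTree step1 step2 t₂ →
      ValidTree step1 step2 (.node2 c t₁ t₂)

/-- Deduction trees of an ABVASS₀ (standard semantics). -/
def IsDeduction (A : ABVASS Q ι) : DTree Q ι → Prop :=
  ValidTree (fun c c' => UnaryStep A c c' ∨ ZeroStep A c c') (BinStep A)

/-- `tower 0 = 1`, `tower (n+1) = 2 ^ tower n`. -/
def tower : ℕ → ℕ
  | 0 => 1
  | n + 1 => 2 ^ tower n

/-- States of the BVASS hierarchy `B_k`. -/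
inductive BSt where
  | qinit : ℕ → BSt
  | q1 : ℕ → BSt
  | q2 : ℕ → BSt
  | qloop : ℕ → BSt
  | qleaf : BSt
deriving DecidableEq

/-- Counters: `Sum.inl i` is `d_i` and `Sum.inr i` is `d'_i` (for `i ≥ 1`). -/
abbrev Cnt := ℕ ⊕ ℕ

/-- The unit vector on counter `c`. -/
def e (c : Cnt) : Cnt → ℤ := fun c' => if c' = c then 1 else 0

/-- The BVASS `B_k`: `B_1` has the single unary rule
`qinit 1 →^{-2 e_{d_1}} qleaf`; for `2 ≤ j ≤ k` we add the unary rules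
`qinit j →^{+e_{d_{j-1}}} q1 j`, `q1 j →^{-e_{d_{j-1}} + 2 e_{d'_{j-1}}} q1 j`,
`q1 j →^0 q2 j`, `q2 j →^{-e_{d'_{j-1}} + e_{d_{j-1}}} q2 j`,
`qloop j →^0 qinit j`, `qloop j →^{-e_{d_j}} qinit (j-1)`, and the split
rule `q2 j → qloop j + qloop j`. -/
def Bsys (k : ℕ) : ABVASS BSt Cnt where
  Tu := {r | r = (BSt.qinit 1, -(2 • e (Sum.inl 1)), BSt.qleaf) ∨
    ∃ j, 2 ≤ j ∧ j ≤ k ∧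
      (r = (BSt.qinit j, e (Sum.inl (j - 1)), BSt.q1 j) ∨
       r = (BSt.q1 j, -e (Sum.inl (j - 1)) + 2 • e (Sum.inr (j - 1)), BSt.q1 j) ∨
       r = (BSt.q1 j, 0, BSt.q2 j) ∨
       r = (BSt.q2 j, -e (Sum.inr (j - 1)) + e (Sum.inl (j - 1)), BSt.q2 j) ∨
       r = (BSt.qloop j, 0, BSt.qinit j) ∨
       r = (BSt.qloop j, -e (Sum.inl j), BSt.qinit (j - 1)))}
  Tf := ∅
  Ts := {r | ∃ j, 2 ≤ j ∧ j ≤ k ∧ r = (BSt.q2 j, BSt.qloop j, BSt.qloop j)}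
  Tz := ∅

/-- The subtree at a node, identified by a path from the root:
`false` selects the (first) child, `true` the second child. -/
def subtreeAt {Q ι : Type} : DTree Q ι → List Bool → Option (DTree Q ι)
  | t, [] => some t
  | .leaf _, _ :: _ => none
  | .node1 _ t, false :: p => subtreeAt t p
  | .node1 _ _, true :: _ => none
  | .node2 _ t₁ _, false :: p => subtreeAt t₁ p
  | .node2 _ _ t₂, true :: p => subtreeAt t₂ p

/-- Two nodes (paths) are incomparable when neither is an ancestor of
(i.e. a prefix of) the other. -/
def Incomparable (p₁ p₂ : List Bool) : Prop := ¬ p₁ <+: p₂ ∧ ¬ p₂ <+: p₁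

namespace Bk

def level : BSt → ℕ
  | .qinit j => j
  | .q1 j => j
  | .q2 j => j
  | .qloop j => j
  | .qleaf => 0

def covT (t : DTree BSt Cnt) : Prop := ∀ l ∈ t.leaves, l.1 = BSt.qleaf

def Wv (j : ℕ) (v : Cnt → ℕ) : ℕ := v (Sum.inl (j - 1)) + v (Sum.inr (j - 1))

def Zv (m : ℕ) (v : Cnt → ℕ) : Prop :=
  ∀ i, 1 ≤ i → i ≤ m → v (Sum.inl i) = 0 ∧ v (Sum.inr i) = 0

/- ### generic tree lemmas -/

lemma subtreeAt_append {Q ι : Type} (p q : List Bool) : ∀ t : DTree Q ι,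
    subtreeAt t (p ++ q) = (subtreeAt t p).bind fun s => subtreeAt s q := by
  induction p with
  | nil => intro t; simp [subtreeAt]
  | cons x p ih => intro t; cases t <;> cases x <;> simp [subtreeAt, ih]

lemma valid_subtreeAt {Q ι : Type} {s1 : Config Q ι → Config Q ι → Prop}
    {s2 : Config Q ι → Config Q ι → Config Q ι → Prop} :
    ∀ (p : List Bool) (t s : DTree Q ι),
    ValidTree s1 s2 t → subtreeAt t p = some s → ValidTree s1 s2 s := by
  intro p
  induction p with
  | nil => intro t s hv h; simp [subtreeAt] at h; exact h ▸ hv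
  | cons x p ih =>
    intro t s hv h
    cases t with
    | leaf c => simp [subtreeAt] at h
    | node1 c t' =>
      cases x with
      | false => cases hv with | one _ hv' => exact ih t' s hv' h
      | true => simp [subtreeAt] at h
    | node2 c t₁ t₂ =>
      cases x with
      | false => cases hv with | two _ hv1 hv2 => exact ih t₁ s hv1 h
      | true => cases hv with | two _ hv1 hv2 => exact ih t₂ s hv2 h

lemma mem_leaves_subtreeAt {Q ι : Type} :
    ∀ (p : List Bool) (t s : DTree Q ι), subtreeAt t p = some s →
    ∀ l ∈ s.leaves, l ∈ t.leaves := by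
  intro p
  induction p with
  | nil => intro t s h; simp [subtreeAt] at h; exact h ▸ (fun l hl => hl)
  | cons x p ih =>
    intro t s h l hl
    cases t with
    | leaf c => simp [subtreeAt] at h
    | node1 c t' =>
      cases x with
      | false => exact ih t' s h l hl
      | true => simp [subtreeAt] at h
    | node2 c t₁ t₂ =>
      cases x with
      | false => exact List.mem_append_left _ (ih t₁ s h l hl)
      | true => exact List.mem_append_right _ (ih t₂ s h l hl)

lemma height_subtreeAt_le {Q ι : Type} :
    ∀ (p : List Bool) (t s : DTree Q ι), subtreeAt t p = some s →
    s.height ≤ t.height := by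
  intro p
  induction p with
  | nil => intro t s h; simp [subtreeAt] at h; exact h ▸ le_rfl
  | cons x p ih =>
    intro t s h
    cases t with
    | leaf c => simp [subtreeAt] at h
    | node1 c t' =>
      cases x with
      | false => exact (ih t' s h).trans (by simp [DTree.height])
      | true => simp [subtreeAt] at h
    | node2 c t₁ t₂ =>
      cases x with
      | false =>
        exact (ih t₁ s h).trans (by simp [DTree.height]; omega)
      | true =>
        exact (ih t₂ s h).trans (by simp [DTree.height]; omega)

lemma covT_node1 {c t} (h : covT (.node1 c t)) : covT t := fun l hl => h l hl

lemma covT_node2l {c t₁ t₂} (h : covT (.node2 c t₁ t₂)) : covT t₁ :=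
  fun l hl => h l (List.mem_append_left _ hl)

lemma covT_node2r {c t₁ t₂} (h : covT (.node2 c t₁ t₂)) : covT t₂ :=
  fun l hl => h l (List.mem_append_right _ hl)

end Bk
namespace Bk

/- ### rule inversion lemmas -/

lemma zero_empty {K : ℕ} {c c' : Config BSt Cnt} (h : ZeroStep (Bsys K) c c') : False := by
  obtain ⟨hm, -, -⟩ := h
  simp [Bsys] at hm

lemma step1_unary {K : ℕ} {c c' : Config BSt Cnt}
    (h : UnaryStep (Bsys K) c c' ∨ ZeroStep (Bsys K) c c') : UnaryStep (Bsys K) c c' := by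
  rcases h with h | h
  · exact h
  · exact absurd h zero_empty

lemma bin_split {K : ℕ} {c c₁ c₂ : Config BSt Cnt} (h : BinStep (Bsys K) c c₁ c₂) :
    (c.1, c₁.1, c₂.1) ∈ (Bsys K).Ts ∧ c.2 = c₁.2 + c₂.2 := by
  rcases h with ⟨hm, -⟩ | h
  · simp [Bsys] at hm
  · exact h

lemma ts_inv {K : ℕ} {q a b : BSt} (h : (q, a, b) ∈ (Bsys K).Ts) :
    ∃ j, 2 ≤ j ∧ q = BSt.q2 j ∧ a = BSt.qloop j ∧ b = BSt.qloop j := by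
  simp only [Bsys, Set.mem_setOf_eq] at h
  obtain ⟨j, h2, hK, h⟩ := h
  simp only [Prod.ext_iff] at h
  exact ⟨j, h2, h.1, h.2.1, h.2.2⟩

lemma tu_qinit {K j : ℕ} {u : Cnt → ℤ} {q' : BSt} (hj : 2 ≤ j)
    (h : (BSt.qinit j, u, q') ∈ (Bsys K).Tu) :
    q' = BSt.q1 j ∧ u = e (Sum.inl (j - 1)) := by
  simp only [Bsys, Set.mem_setOf_eq] at h
  rcases h with h | ⟨j', h2, hK, h | h | h | h | h | h⟩ <;>
    simp only [Prod.ext_iff, BSt.qinit.injEq] at h <;>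
    first
    | omega
    | (obtain ⟨he, hu, hq⟩ := h; subst he; exact ⟨hq, hu⟩)
    | simp_all

lemma tu_qinit1 {K : ℕ} {u : Cnt → ℤ} {q' : BSt}
    (h : (BSt.qinit 1, u, q') ∈ (Bsys K).Tu) :
    q' = BSt.qleaf ∧ u = -(2 • e (Sum.inl 1)) := by
  simp only [Bsys, Set.mem_setOf_eq] at h
  rcases h with h | ⟨j', h2, hK, h | h | h | h | h | h⟩ <;>
    simp only [Prod.ext_iff, BSt.qinit.injEq] at h <;>
    first
    | omega
    | (obtain ⟨he, hu, hq⟩ := h; exact ⟨hq, hu⟩)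
    | simp_all

lemma tu_q1 {K j : ℕ} {u : Cnt → ℤ} {q' : BSt}
    (h : (BSt.q1 j, u, q') ∈ (Bsys K).Tu) :
    (q' = BSt.q1 j ∧ u = -e (Sum.inl (j - 1)) + 2 • e (Sum.inr (j - 1))) ∨
    (q' = BSt.q2 j ∧ u = 0) := by
  simp only [Bsys, Set.mem_setOf_eq] at h
  rcases h with h | ⟨j', h2, hK, h | h | h | h | h | h⟩ <;>
    simp only [Prod.ext_iff, BSt.q1.injEq] at h <;>
    first
    | (obtain ⟨he, hu, hq⟩ := h; subst he; exact Or.inl ⟨hq, hu⟩)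
    | (obtain ⟨he, hu, hq⟩ := h; subst he; exact Or.inr ⟨hq, hu⟩)
    | simp_all

lemma tu_q2 {K j : ℕ} {u : Cnt → ℤ} {q' : BSt}
    (h : (BSt.q2 j, u, q') ∈ (Bsys K).Tu) :
    q' = BSt.q2 j ∧ u = -e (Sum.inr (j - 1)) + e (Sum.inl (j - 1)) := by
  simp only [Bsys, Set.mem_setOf_eq] at h
  rcases h with h | ⟨j', h2, hK, h | h | h | h | h | h⟩ <;>
    simp only [Prod.ext_iff, BSt.q2.injEq] at h <;>
    first
    | (obtain ⟨he, hu, hq⟩ := h; subst he; exact ⟨hq, hu⟩)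
    | simp_all

lemma tu_qloop {K j : ℕ} {u : Cnt → ℤ} {q' : BSt}
    (h : (BSt.qloop j, u, q') ∈ (Bsys K).Tu) :
    (q' = BSt.qinit j ∧ u = 0) ∨ (q' = BSt.qinit (j - 1) ∧ u = -e (Sum.inl j)) := by
  simp only [Bsys, Set.mem_setOf_eq] at h
  rcases h with h | ⟨j', h2, hK, h | h | h | h | h | h⟩ <;>
    simp only [Prod.ext_iff, BSt.qloop.injEq] at h <;>
    first
    | (obtain ⟨he, hu, hq⟩ := h; subst he; exact Or.inl ⟨hq, hu⟩)
    | (obtain ⟨he, hu, hq⟩ := h; subst he; exact Or.inr ⟨hq, hu⟩)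
    | simp_all

lemma tu_qleaf {K : ℕ} {u : Cnt → ℤ} {q' : BSt}
    (h : (BSt.qleaf, u, q') ∈ (Bsys K).Tu) : False := by
  simp only [Bsys, Set.mem_setOf_eq] at h
  rcases h with h | ⟨j', h2, hK, h | h | h | h | h | h⟩ <;>
    simp_all

end Bk
namespace Bk

/- ### per-rule coordinate facts -/

lemma e_apply (c c' : Cnt) : e c c' = if c' = c then 1 else 0 := rfl

lemma tu_level {K : ℕ} {q q' : BSt} {u : Cnt → ℤ} (h : (q, u, q') ∈ (Bsys K).Tu) :
    level q' ≤ level q := by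
  simp only [Bsys, Set.mem_setOf_eq, Prod.ext_iff] at h
  rcases h with ⟨hq, hu, hq'⟩ |
    ⟨j', h2, hK, ⟨hq,hu,hq'⟩|⟨hq,hu,hq'⟩|⟨hq,hu,hq'⟩|⟨hq,hu,hq'⟩|⟨hq,hu,hq'⟩|⟨hq,hu,hq'⟩⟩ <;>
    subst hq <;> subst hq' <;> simp [level]

lemma tu_inlj {K : ℕ} {q q' : BSt} {u : Cnt → ℤ} {j : ℕ}
    (h : (q, u, q') ∈ (Bsys K).Tu) (hl : level q ≤ j) : u (Sum.inl j) ≤ 0 := by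
  simp only [Bsys, Set.mem_setOf_eq, Prod.ext_iff] at h
  rcases h with ⟨hq, hu, hq'⟩ |
    ⟨j', h2, hK, ⟨hq,hu,hq'⟩|⟨hq,hu,hq'⟩|⟨hq,hu,hq'⟩|⟨hq,hu,hq'⟩|⟨hq,hu,hq'⟩|⟨hq,hu,hq'⟩⟩ <;>
    subst hq <;> subst hu <;> simp [level] at hl <;>
    simp only [Pi.add_apply, Pi.neg_apply, Pi.smul_apply, Pi.mul_apply, Pi.zero_apply, nsmul_eq_mul,
      Nat.cast_ofNat, Pi.ofNat_apply, e_apply, Sum.inl.injEq, Sum.inr.injEq, reduceCtorEq, if_false] <;>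
    first
    | (split_ifs <;> omega)
    | omega
    | simp

lemma tu_Z {K : ℕ} {q q' : BSt} {u : Cnt → ℤ} {m i : ℕ}
    (h : (q, u, q') ∈ (Bsys K).Tu) (hl : m + 2 ≤ level q) (h1 : 1 ≤ i) (him : i ≤ m) :
    u (Sum.inl i) = 0 ∧ u (Sum.inr i) = 0 := by
  simp only [Bsys, Set.mem_setOf_eq, Prod.ext_iff] at h
  rcases h with ⟨hq, hu, hq'⟩ |
    ⟨j', h2, hK, ⟨hq,hu,hq'⟩|⟨hq,hu,hq'⟩|⟨hq,hu,hq'⟩|⟨hq,hu,hq'⟩|⟨hq,hu,hq'⟩|⟨hq,hu,hq'⟩⟩ <;>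
    subst hq <;> subst hu <;> simp [level] at hl <;>
    constructor <;>
    simp only [Pi.add_apply, Pi.neg_apply, Pi.smul_apply, Pi.mul_apply, Pi.zero_apply, nsmul_eq_mul,
      Nat.cast_ofNat, Pi.ofNat_apply, e_apply, Sum.inl.injEq, Sum.inr.injEq, reduceCtorEq, if_false] <;>
    first
    | (split_ifs <;> omega)
    | omega
    | simp

lemma Zv_split {m : ℕ} {v a b : Cnt → ℕ} (h : v = a + b) (hz : Zv m v) :
    Zv m a ∧ Zv m b := by
  constructor <;> intro i h1 hm <;>
  · obtain ⟨e1, e2⟩ := hz i h1 hm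
    rw [h] at e1 e2
    simp only [Pi.add_apply] at e1 e2
    omega

lemma level_mono {K : ℕ} : ∀ (p : List Bool) (t s : DTree BSt Cnt),
    IsDeduction (Bsys K) t → subtreeAt t p = some s →
    level s.root.1 ≤ level t.root.1 := by
  intro p
  induction p with
  | nil => intro t s _ h; simp [subtreeAt] at h; exact h ▸ le_rfl
  | cons x p ih =>
    intro t s hv h
    cases t with
    | leaf c => simp [subtreeAt] at h
    | node1 c t' =>
      cases x with
      | false =>
        cases hv with | one hst hv' =>
        obtain ⟨u, hm, -⟩ := step1_unary hst
        exact (ih t' s hv' h).trans (tu_level hm)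
      | true => simp [subtreeAt] at h
    | node2 c t₁ t₂ =>
      cases hv with | two hst hv1 hv2 =>
      obtain ⟨hm, -⟩ := bin_split hst
      obtain ⟨j', -, hq, ha, hb⟩ := ts_inv hm
      have h1 : level t₁.root.1 = level c.1 := by rw [ha, hq]; rfl
      have h2 : level t₂.root.1 = level c.1 := by rw [hb, hq]; rfl
      cases x with
      | false => exact (ih t₁ s hv1 h).trans (le_of_eq h1)
      | true => exact (ih t₂ s hv2 h).trans (le_of_eq h2)

lemma Z_path {K m : ℕ} : ∀ (p : List Bool) (t s : DTree BSt Cnt),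
    IsDeduction (Bsys K) t → subtreeAt t p = some s →
    m + 2 ≤ level s.root.1 → Zv m t.root.2 → Zv m s.root.2 := by
  intro p
  induction p with
  | nil => intro t s _ h _ hz; simp [subtreeAt] at h; exact h ▸ hz
  | cons x p ih =>
    intro t s hv h hlev hz
    cases t with
    | leaf c => simp [subtreeAt] at h
    | node1 c t' =>
      have hz' : Zv m c.2 := hz
      cases x with
      | false =>
        cases hv with | one hst hv' =>
        obtain ⟨u, hm, hu⟩ := step1_unary hst
        refine ih t' s hv' h hlev ?_
        have hl2 : m + 2 ≤ level c.1 := by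
          have := level_mono p t' s hv' h
          exact le_trans hlev (le_trans this (tu_level hm))
        intro i h1 him
        obtain ⟨e1, e2⟩ := tu_Z hm hl2 h1 him
        obtain ⟨f1, f2⟩ := hz' i h1 him
        have g1 := hu (Sum.inl i)
        have g2 := hu (Sum.inr i)
        rw [e1] at g1; rw [e2] at g2
        constructor <;> omega
      | true => simp [subtreeAt] at h
    | node2 c t₁ t₂ =>
      have hz' : Zv m c.2 := hz
      cases hv with | two hst hv1 hv2 =>
      obtain ⟨-, hsum⟩ := bin_split hst
      obtain ⟨hz1, hz2⟩ := Zv_split hsum hz'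
      cases x with
      | false => exact ih t₁ s hv1 h hlev hz1
      | true => exact ih t₂ s hv2 h hlev hz2

lemma mono_inlj {K j : ℕ} : ∀ (p : List Bool) (t s : DTree BSt Cnt),
    IsDeduction (Bsys K) t → level t.root.1 ≤ j → subtreeAt t p = some s →
    s.root.2 (Sum.inl j) ≤ t.root.2 (Sum.inl j) := by
  intro p
  induction p with
  | nil => intro t s _ _ h; simp [subtreeAt] at h; exact h ▸ le_rfl
  | cons x p ih =>
    intro t s hv hlev h
    cases t with
    | leaf c => simp [subtreeAt] at h
    | node1 c t' =>
      have hlev' : level c.1 ≤ j := hlev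
      cases x with
      | false =>
        cases hv with | one hst hv' =>
        obtain ⟨u, hm, hu⟩ := step1_unary hst
        have h1 : t'.root.2 (Sum.inl j) ≤ c.2 (Sum.inl j) := by
          have := hu (Sum.inl j)
          have := tu_inlj hm hlev'
          omega
        have h2 : level t'.root.1 ≤ j := le_trans (tu_level hm) hlev'
        have h3 := ih t' s hv' h2 h
        show s.root.2 (Sum.inl j) ≤ c.2 (Sum.inl j)
        omega
      | true => simp [subtreeAt] at h
    | node2 c t₁ t₂ =>
      have hlev' : level c.1 ≤ j := hlev
      cases hv with | two hst hv1 hv2 =>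
      obtain ⟨hm, hsum⟩ := bin_split hst
      obtain ⟨j', -, hq, ha, hb⟩ := ts_inv hm
      have hl1 : level t₁.root.1 ≤ j := by rw [ha]; rw [hq] at hlev'; exact hlev'
      have hl2 : level t₂.root.1 ≤ j := by rw [hb]; rw [hq] at hlev'; exact hlev'
      have hcs : c.2 (Sum.inl j) = t₁.root.2 (Sum.inl j) + t₂.root.2 (Sum.inl j) := by
        rw [hsum]; simp [Pi.add_apply]
      show s.root.2 (Sum.inl j) ≤ c.2 (Sum.inl j)
      cases x with
      | false => have := ih t₁ s hv1 hl1 h; omega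
      | true => have := ih t₂ s hv2 hl2 h; omega

lemma sum_inlj {K j : ℕ} : ∀ (a : List Bool) (b : List Bool) (t ta tb : DTree BSt Cnt),
    IsDeduction (Bsys K) t → level t.root.1 ≤ j → Incomparable a b →
    subtreeAt t a = some ta → subtreeAt t b = some tb →
    ta.root.2 (Sum.inl j) + tb.root.2 (Sum.inl j) ≤ t.root.2 (Sum.inl j) := by
  intro a
  induction a with
  | nil =>
    intro b t ta tb _ _ hinc _ _
    exact absurd List.nil_prefix hinc.1
  | cons x a ih =>
    intro b t ta tb hv hlev hinc ha hb
    cases b with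
    | nil => exact absurd List.nil_prefix hinc.2
    | cons y b =>
      cases t with
      | leaf c => simp [subtreeAt] at ha
      | node1 c t' =>
        have hlev' : level c.1 ≤ j := hlev
        cases x with
        | true => simp [subtreeAt] at ha
        | false =>
          cases y with
          | true => simp [subtreeAt] at hb
          | false =>
            cases hv with | one hst hv' =>
            obtain ⟨u, hm, hu⟩ := step1_unary hst
            have h1 : t'.root.2 (Sum.inl j) ≤ c.2 (Sum.inl j) := by
              have := hu (Sum.inl j)
              have := tu_inlj hm hlev'
              omega
            have h2 : level t'.root.1 ≤ j := le_trans (tu_level hm) hlev'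
            have hinc' : Incomparable a b := by
              constructor
              · intro hh; exact hinc.1 ((List.cons_prefix_cons).2 ⟨rfl, hh⟩)
              · intro hh; exact hinc.2 ((List.cons_prefix_cons).2 ⟨rfl, hh⟩)
            have := ih b t' ta tb hv' h2 hinc' ha hb
            show ta.root.2 (Sum.inl j) + tb.root.2 (Sum.inl j) ≤ c.2 (Sum.inl j)
            omega
      | node2 c t₁ t₂ =>
        have hlev' : level c.1 ≤ j := hlev
        cases hv with | two hst hv1 hv2 =>
        obtain ⟨hm, hsum⟩ := bin_split hst
        obtain ⟨j', -, hq, hca, hcb⟩ := ts_inv hm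
        have hl1 : level t₁.root.1 ≤ j := by rw [hca]; rw [hq] at hlev'; exact hlev'
        have hl2 : level t₂.root.1 ≤ j := by rw [hcb]; rw [hq] at hlev'; exact hlev'
        have hcs : c.2 (Sum.inl j) = t₁.root.2 (Sum.inl j) + t₂.root.2 (Sum.inl j) := by
          rw [hsum]; simp [Pi.add_apply]
        show ta.root.2 (Sum.inl j) + tb.root.2 (Sum.inl j) ≤ c.2 (Sum.inl j)
        cases x <;> cases y
        · have hinc' : Incomparable a b := by
            constructor
            · intro hh; exact hinc.1 ((List.cons_prefix_cons).2 ⟨rfl, hh⟩)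
            · intro hh; exact hinc.2 ((List.cons_prefix_cons).2 ⟨rfl, hh⟩)
          have := ih b t₁ ta tb hv1 hl1 hinc' ha hb
          omega
        · have m1 := mono_inlj (K := K) a t₁ ta hv1 hl1 ha
          have m2 := mono_inlj (K := K) b t₂ tb hv2 hl2 hb
          omega
        · have m1 := mono_inlj (K := K) a t₂ ta hv2 hl2 ha
          have m2 := mono_inlj (K := K) b t₁ tb hv1 hl1 hb
          omega
        · have hinc' : Incomparable a b := by
            constructor
            · intro hh; exact hinc.1 ((List.cons_prefix_cons).2 ⟨rfl, hh⟩)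
            · intro hh; exact hinc.2 ((List.cons_prefix_cons).2 ⟨rfl, hh⟩)
          have := ih b t₂ ta tb hv2 hl2 hinc' ha hb
          omega

end Bk
namespace Bk

lemma Zv_unary {K m : ℕ} {c c' : Config BSt Cnt} (h : UnaryStep (Bsys K) c c')
    (hl : m + 2 ≤ level c.1) (hz : Zv m c.2) : Zv m c'.2 := by
  obtain ⟨u, hm, hu⟩ := h
  intro i h1 him
  obtain ⟨z1, z2⟩ := tu_Z hm hl h1 him
  obtain ⟨f1, f2⟩ := hz i h1 him
  have g1 := hu (Sum.inl i)
  have g2 := hu (Sum.inr i)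
  rw [z1] at g1; rw [z2] at g2
  constructor <;> omega

def GoodC (j m : ℕ) (t : DTree BSt Cnt) : Prop :=
  ∃ a b ta tb, a ≠ [] ∧ b ≠ [] ∧ Incomparable a b ∧
    subtreeAt t a = some ta ∧ subtreeAt t b = some tb ∧
    ta.root.1 = BSt.qloop j ∧ tb.root.1 = BSt.qloop j ∧
    Wv j ta.root.2 ≤ m + 1 ∧ Wv j tb.root.2 ≤ m + 1 ∧
    Zv (j - 2) ta.root.2 ∧ Zv (j - 2) tb.root.2

lemma Incomparable_cons {x : Bool} {a b : List Bool} (h : Incomparable a b) :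
    Incomparable (x :: a) (x :: b) :=
  ⟨fun hh => h.1 (List.cons_prefix_cons.1 hh).2,
   fun hh => h.2 (List.cons_prefix_cons.1 hh).2⟩

lemma Incomparable_ft : Incomparable [false] [true] := by
  constructor <;> intro hh <;> rcases List.cons_prefix_cons.1 hh with ⟨h, -⟩ <;> simp at h

lemma GoodC_node1 {j m : ℕ} {c : Config BSt Cnt} {t : DTree BSt Cnt}
    (h : GoodC j m t) : GoodC j m (.node1 c t) := by
  obtain ⟨a, b, ta, tb, h1, h2, h3, h4, h5, h6⟩ := h
  exact ⟨false :: a, false :: b, ta, tb, by simp, by simp, Incomparable_cons h3, h4, h5, h6⟩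

lemma GoodC_node2l {j m : ℕ} {c : Config BSt Cnt} {t₁ t₂ : DTree BSt Cnt}
    (h : GoodC j m t₁) : GoodC j m (.node2 c t₁ t₂) := by
  obtain ⟨a, b, ta, tb, h1, h2, h3, h4, h5, h6⟩ := h
  exact ⟨false :: a, false :: b, ta, tb, by simp, by simp, Incomparable_cons h3, h4, h5, h6⟩

lemma GoodC_node2r {j m : ℕ} {c : Config BSt Cnt} {t₁ t₂ : DTree BSt Cnt}
    (h : GoodC j m t₂) : GoodC j m (.node2 c t₁ t₂) := by
  obtain ⟨a, b, ta, tb, h1, h2, h3, h4, h5, h6⟩ := h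
  exact ⟨true :: a, true :: b, ta, tb, by simp, by simp, Incomparable_cons h3, h4, h5, h6⟩

lemma inner {K : ℕ} (j : ℕ) (hj : 2 ≤ j)
    (NE : ∀ s : DTree BSt Cnt, IsDeduction (Bsys K) s → covT s →
      s.root.1 = BSt.qinit (j - 1) → Zv (j - 2) s.root.2 →
      s.root.2 (Sum.inl (j - 1)) < tower (j - 1) → False) :
    ∀ N, ∀ t : DTree BSt Cnt, t.height ≤ N → IsDeduction (Bsys K) t → covT t →
    ∀ m, m < tower (j - 1) → Zv (j - 2) t.root.2 →
    ((t.root.1 = BSt.qinit j ∧ Wv j t.root.2 ≤ m) ∨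
     (t.root.1 = BSt.q1 j ∧
       2 * t.root.2 (Sum.inl (j - 1)) + t.root.2 (Sum.inr (j - 1)) ≤ 2 * m + 2) ∨
     (t.root.1 = BSt.q2 j ∧ Wv j t.root.2 ≤ 2 * m + 2) ∨
     (t.root.1 = BSt.qloop j ∧ Wv j t.root.2 ≤ m)) →
    GoodC j m t := by
  intro N
  induction N with
  | zero =>
    intro t hht hv hc m hm hZ hcase
    cases t with
    | leaf c =>
      have hlf : c.1 = BSt.qleaf := hc c (by simp [DTree.leaves])
      rcases hcase with ⟨h, -⟩ | ⟨h, -⟩ | ⟨h, -⟩ | ⟨h, -⟩ <;>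
        · have h' : c.1 = _ := h
          rw [hlf] at h'
          simp at h'
    | node1 c s => simp [DTree.height] at hht
    | node2 c s₁ s₂ => simp [DTree.height] at hht
  | succ N ih =>
    intro t hht hv hc m hm hZ hcase
    cases t with
    | leaf c =>
      have hlf : c.1 = BSt.qleaf := hc c (by simp [DTree.leaves])
      rcases hcase with ⟨h, -⟩ | ⟨h, -⟩ | ⟨h, -⟩ | ⟨h, -⟩ <;>
        · have h' : c.1 = _ := h
          rw [hlf] at h'
          simp at h'
    | node1 c s =>
      have hZ' : Zv (j - 2) c.2 := hZ
      have hhts : s.height ≤ N := by simp [DTree.height] at hht; omega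
      cases hv with | one hstep hv' =>
      have hus : UnaryStep (Bsys K) c s.root := step1_unary hstep
      obtain ⟨u, hmem, hu⟩ := hus
      rcases hcase with ⟨hst, hw⟩ | ⟨hst, hw⟩ | ⟨hst, hw⟩ | ⟨hst, hw⟩
      · -- qinit j
        have hst' : c.1 = BSt.qinit j := hst
        have hw' : Wv j c.2 ≤ m := hw
        rw [hst'] at hmem
        obtain ⟨hq', hueq⟩ := tu_qinit hj hmem
        subst hueq
        have e1 := hu (Sum.inl (j - 1))
        have e2 := hu (Sum.inr (j - 1))
        simp only [e_apply, Sum.inl.injEq, Sum.inr.injEq, reduceCtorEq, if_false,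
          if_true, if_pos rfl] at e1 e2
        have hZs : Zv (j - 2) s.root.2 :=
          Zv_unary ⟨_, by rw [hst']; exact hmem, hu⟩
            (by rw [hst']; show j - 2 + 2 ≤ j; omega) hZ'
        apply GoodC_node1
        apply ih s hhts hv' (covT_node1 hc) m hm hZs
        refine Or.inr (Or.inl ⟨hq', ?_⟩)
        unfold Wv at hw'
        omega
      · -- q1 j
        have hst' : c.1 = BSt.q1 j := hst
        have hw' : 2 * c.2 (Sum.inl (j - 1)) + c.2 (Sum.inr (j - 1)) ≤ 2 * m + 2 := hw
        rw [hst'] at hmem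
        have hZs : Zv (j - 2) s.root.2 :=
          Zv_unary ⟨_, by rw [hst']; exact hmem, hu⟩
            (by rw [hst']; show j - 2 + 2 ≤ j; omega) hZ'
        rcases tu_q1 hmem with ⟨hq', hueq⟩ | ⟨hq', hueq⟩
        · subst hueq
          have e1 := hu (Sum.inl (j - 1))
          have e2 := hu (Sum.inr (j - 1))
          simp only [Pi.add_apply, Pi.neg_apply, Pi.smul_apply, Pi.mul_apply, Pi.zero_apply,
            nsmul_eq_mul, Nat.cast_ofNat, Pi.ofNat_apply, e_apply, Sum.inl.injEq,
            Sum.inr.injEq, reduceCtorEq, if_false, if_true, if_pos rfl] at e1 e2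
          apply GoodC_node1
          apply ih s hhts hv' (covT_node1 hc) m hm hZs
          refine Or.inr (Or.inl ⟨hq', ?_⟩)
          omega
        · subst hueq
          have e1 := hu (Sum.inl (j - 1))
          have e2 := hu (Sum.inr (j - 1))
          simp only [Pi.zero_apply, add_zero, Nat.cast_inj] at e1 e2
          apply GoodC_node1
          apply ih s hhts hv' (covT_node1 hc) m hm hZs
          refine Or.inr (Or.inr (Or.inl ⟨hq', ?_⟩))
          unfold Wv
          omega
      · -- q2 j
        have hst' : c.1 = BSt.q2 j := hst
        have hw' : Wv j c.2 ≤ 2 * m + 2 := hw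
        rw [hst'] at hmem
        have hZs : Zv (j - 2) s.root.2 :=
          Zv_unary ⟨_, by rw [hst']; exact hmem, hu⟩
            (by rw [hst']; show j - 2 + 2 ≤ j; omega) hZ'
        obtain ⟨hq', hueq⟩ := tu_q2 hmem
        subst hueq
        have e1 := hu (Sum.inl (j - 1))
        have e2 := hu (Sum.inr (j - 1))
        simp only [Pi.add_apply, Pi.neg_apply, e_apply, Sum.inl.injEq, Sum.inr.injEq,
          reduceCtorEq, if_false, if_true, if_pos rfl] at e1 e2
        apply GoodC_node1
        apply ih s hhts hv' (covT_node1 hc) m hm hZs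
        refine Or.inr (Or.inr (Or.inl ⟨hq', ?_⟩))
        unfold Wv at hw' ⊢
        omega
      · -- qloop j
        have hst' : c.1 = BSt.qloop j := hst
        have hw' : Wv j c.2 ≤ m := hw
        rw [hst'] at hmem
        have hZs : Zv (j - 2) s.root.2 :=
          Zv_unary ⟨_, by rw [hst']; exact hmem, hu⟩
            (by rw [hst']; show j - 2 + 2 ≤ j; omega) hZ'
        rcases tu_qloop hmem with ⟨hq', hueq⟩ | ⟨hq', hueq⟩
        · subst hueq
          have heq1 := hu (Sum.inl (j - 1))
          have heq2 := hu (Sum.inr (j - 1))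
          simp only [Pi.zero_apply, add_zero, Nat.cast_inj] at heq1 heq2
          apply GoodC_node1
          apply ih s hhts hv' (covT_node1 hc) m hm hZs
          refine Or.inl ⟨hq', ?_⟩
          unfold Wv at hw' ⊢
          omega
        · -- escape: impossible
          exfalso
          subst hueq
          have e1 := hu (Sum.inl (j - 1))
          simp only [Pi.neg_apply, e_apply, Sum.inl.injEq] at e1
          rw [if_neg (by omega)] at e1
          refine NE s hv' (covT_node1 hc) hq' hZs ?_
          unfold Wv at hw'
          omega
    | node2 c s₁ s₂ =>
      have hZ' : Zv (j - 2) c.2 := hZ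
      cases hv with | two hstep hv1 hv2 =>
      obtain ⟨hmem, hsum⟩ := bin_split hstep
      obtain ⟨j', h2', hqe, hq1, hq2⟩ := ts_inv hmem
      rcases hcase with ⟨hst, hw⟩ | ⟨hst, hw⟩ | ⟨hst, hw⟩ | ⟨hst, hw⟩ <;>
        [skip; skip; skip; skip]
      · exfalso; have h' : c.1 = _ := hst; rw [h'] at hqe; simp at hqe
      · exfalso; have h' : c.1 = _ := hst; rw [h'] at hqe; simp at hqe
      · -- q2 j: split
        have hst' : c.1 = BSt.q2 j := hst
        have hw' : Wv j c.2 ≤ 2 * m + 2 := hw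
        rw [hst'] at hqe
        have hjj : j = j' := by simpa using hqe
        subst hjj
        have hh1 : c.2 (Sum.inl (j - 1)) =
            s₁.root.2 (Sum.inl (j - 1)) + s₂.root.2 (Sum.inl (j - 1)) := by rw [hsum]; rfl
        have hh2 : c.2 (Sum.inr (j - 1)) =
            s₁.root.2 (Sum.inr (j - 1)) + s₂.root.2 (Sum.inr (j - 1)) := by rw [hsum]; rfl
        obtain ⟨hZ1, hZ2⟩ := Zv_split hsum hZ'
        have hhts1 : s₁.height ≤ N := by simp [DTree.height] at hht; omega
        have hhts2 : s₂.height ≤ N := by simp [DTree.height] at hht; omega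
        by_cases hb1 : Wv j s₁.root.2 ≤ m + 1
        · by_cases hb2 : Wv j s₂.root.2 ≤ m + 1
          · exact ⟨[false], [true], s₁, s₂, by simp, by simp, Incomparable_ft,
              by simp [subtreeAt], by simp [subtreeAt], hq1, hq2, hb1, hb2, hZ1, hZ2⟩
          · -- Wv s₂ ≥ m+2 hence Wv s₁ ≤ m : recurse into s₁
            apply GoodC_node2l
            apply ih s₁ hhts1 hv1 (covT_node2l hc) m hm hZ1
            refine Or.inr (Or.inr (Or.inr ⟨hq1, ?_⟩))
            unfold Wv at hw' hb2 ⊢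
            omega
        · -- Wv s₁ ≥ m+2 hence Wv s₂ ≤ m : recurse into s₂
          apply GoodC_node2r
          apply ih s₂ hhts2 hv2 (covT_node2r hc) m hm hZ2
          refine Or.inr (Or.inr (Or.inr ⟨hq2, ?_⟩))
          unfold Wv at hw' hb1 ⊢
          omega
      · exfalso; have h' : c.1 = _ := hst; rw [h'] at hqe; simp at hqe

end Bk
namespace Bk

lemma budgetPos {K j : ℕ} (hj : 2 ≤ j) : ∀ t : DTree BSt Cnt,
    IsDeduction (Bsys K) t → covT t →
    (t.root.1 = BSt.qinit j ∨ t.root.1 = BSt.q1 j ∨ t.root.1 = BSt.q2 j ∨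
      t.root.1 = BSt.qloop j) →
    1 ≤ t.root.2 (Sum.inl j) := by
  intro t
  induction t with
  | leaf c =>
    intro _ hc hcase
    have hlf : c.1 = BSt.qleaf := hc c (by simp [DTree.leaves])
    rcases hcase with h | h | h | h <;>
      · have h' : c.1 = _ := h
        rw [hlf] at h'
        simp at h'
  | node1 c s ihs =>
    intro hv hc hcase
    cases hv with | one hstep hv' =>
    obtain ⟨u, hmem, hu⟩ := step1_unary hstep
    have hu1 := hu (Sum.inl j)
    show 1 ≤ c.2 (Sum.inl j)
    rcases hcase with h | h | h | h
    · have h' : c.1 = BSt.qinit j := h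
      rw [h'] at hmem
      obtain ⟨hq', hueq⟩ := tu_qinit hj hmem
      subst hueq
      simp only [e_apply, Sum.inl.injEq] at hu1
      rw [if_neg (by omega)] at hu1
      have := ihs hv' (covT_node1 hc) (Or.inr (Or.inl hq'))
      omega
    · have h' : c.1 = BSt.q1 j := h
      rw [h'] at hmem
      rcases tu_q1 hmem with ⟨hq', hueq⟩ | ⟨hq', hueq⟩
      · subst hueq
        simp only [Pi.add_apply, Pi.neg_apply, Pi.smul_apply, Pi.mul_apply, nsmul_eq_mul,
          Nat.cast_ofNat, Pi.ofNat_apply, e_apply, Sum.inl.injEq, Sum.inr.injEq,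
          reduceCtorEq, if_false] at hu1
        rw [if_neg (by omega)] at hu1
        have := ihs hv' (covT_node1 hc) (Or.inr (Or.inl hq'))
        omega
      · subst hueq
        simp only [Pi.zero_apply, add_zero, Nat.cast_inj] at hu1
        have := ihs hv' (covT_node1 hc) (Or.inr (Or.inr (Or.inl hq')))
        omega
    · have h' : c.1 = BSt.q2 j := h
      rw [h'] at hmem
      obtain ⟨hq', hueq⟩ := tu_q2 hmem
      subst hueq
      simp only [Pi.add_apply, Pi.neg_apply, e_apply, Sum.inl.injEq, Sum.inr.injEq,
        reduceCtorEq, if_false] at hu1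
      rw [if_neg (by omega)] at hu1
      have := ihs hv' (covT_node1 hc) (Or.inr (Or.inr (Or.inl hq')))
      omega
    · have h' : c.1 = BSt.qloop j := h
      rw [h'] at hmem
      rcases tu_qloop hmem with ⟨hq', hueq⟩ | ⟨hq', hueq⟩
      · subst hueq
        simp only [Pi.zero_apply, add_zero, Nat.cast_inj] at hu1
        have := ihs hv' (covT_node1 hc) (Or.inl hq')
        omega
      · subst hueq
        simp only [Pi.neg_apply, e_apply, if_true] at hu1
        omega
  | node2 c s₁ s₂ ih1 ih2 =>
    intro hv hc hcase
    cases hv with | two hstep hv1 hv2 =>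
    obtain ⟨hmem, hsum⟩ := bin_split hstep
    obtain ⟨j', h2', hqe, hq1, hq2⟩ := ts_inv hmem
    show 1 ≤ c.2 (Sum.inl j)
    have hcs : c.2 (Sum.inl j) = s₁.root.2 (Sum.inl j) + s₂.root.2 (Sum.inl j) := by
      rw [hsum]; rfl
    rcases hcase with h | h | h | h <;> (have h' : c.1 = _ := h; rw [h'] at hqe)
    · simp at hqe
    · simp at hqe
    · have hjj : j = j' := by simpa using hqe
      subst hjj
      have := ih1 hv1 (covT_node2l hc) (Or.inr (Or.inr (Or.inr hq1)))
      omega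
    · simp at hqe

lemma budget {K j : ℕ} (hj : 2 ≤ j)
    (NE : ∀ s : DTree BSt Cnt, IsDeduction (Bsys K) s → covT s →
      s.root.1 = BSt.qinit (j - 1) → Zv (j - 2) s.root.2 →
      s.root.2 (Sum.inl (j - 1)) < tower (j - 1) → False) :
    ∀ N, ∀ t : DTree BSt Cnt, t.height ≤ N → IsDeduction (Bsys K) t → covT t →
    t.root.1 = BSt.qinit j → Zv (j - 2) t.root.2 →
    2 ^ (tower (j - 1) - Wv j t.root.2) ≤ t.root.2 (Sum.inl j) := by
  intro N
  induction N with
  | zero =>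
    intro t hht hv hc hst hZ
    cases t with
    | leaf c =>
      have hlf : c.1 = BSt.qleaf := hc c (by simp [DTree.leaves])
      have h' : c.1 = BSt.qinit j := hst
      rw [hlf] at h'; simp at h'
    | node1 c s => simp [DTree.height] at hht
    | node2 c s₁ s₂ => simp [DTree.height] at hht
  | succ N ih =>
    intro t hht hv hc hst hZ
    by_cases hbig : tower (j - 1) ≤ Wv j t.root.2
    · have h0 : tower (j - 1) - Wv j t.root.2 = 0 := by omega
      rw [h0, pow_zero]
      exact budgetPos hj t hv hc (Or.inl hst)
    · push_neg at hbig
      obtain ⟨a, b, ta, tb, hna, hnb, hinc, hsa, hsb, hqa, hqb, hwa, hwb, hza, hzb⟩ :=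
        inner j hj NE (N + 1) t hht hv hc (Wv j t.root.2) hbig hZ (Or.inl ⟨hst, le_rfl⟩)
      have key : ∀ (q : List Bool) (tc : DTree BSt Cnt), subtreeAt t q = some tc →
          tc.root.1 = BSt.qloop j → Wv j tc.root.2 ≤ Wv j t.root.2 + 1 →
          Zv (j - 2) tc.root.2 →
          2 ^ (tower (j - 1) - (Wv j t.root.2 + 1)) ≤ tc.root.2 (Sum.inl j) := by
        intro q tc hsub hqc hwc hzc
        have hvc := valid_subtreeAt q t tc hv hsub
        have hcc : covT tc := fun l hl => hc l (mem_leaves_subtreeAt q t tc hsub l hl)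
        cases tc with
        | leaf c =>
          have hlf : c.1 = BSt.qleaf := hcc c (by simp [DTree.leaves])
          have h' : c.1 = BSt.qloop j := hqc
          rw [hlf] at h'; simp at h'
        | node2 c s₁ s₂ =>
          cases hvc with | two hstep hv1 hv2 =>
          obtain ⟨hmem, -⟩ := bin_split hstep
          obtain ⟨j', -, hqe, -, -⟩ := ts_inv hmem
          have h' : c.1 = BSt.qloop j := hqc
          rw [h'] at hqe; simp at hqe
        | node1 c s =>
          cases hvc with | one hstep hvc' =>
          obtain ⟨u, hmem, hu⟩ := step1_unary hstep
          have hqc' : c.1 = BSt.qloop j := hqc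
          have hwc' : Wv j c.2 ≤ Wv j t.root.2 + 1 := hwc
          have hzc' : Zv (j - 2) c.2 := hzc
          rw [hqc'] at hmem
          have hhts : s.height ≤ N := by
            have h1 := height_subtreeAt_le q t _ hsub
            simp [DTree.height] at h1
            omega
          show _ ≤ c.2 (Sum.inl j)
          rcases tu_qloop hmem with ⟨hq', hueq⟩ | ⟨hq', hueq⟩
          · -- loop back to qinit j
            subst hueq
            have heq : ∀ i, s.root.2 i = c.2 i := by
              intro i
              have := hu i
              simp only [Pi.zero_apply, add_zero, Nat.cast_inj] at this
              exact this
            have hZs : Zv (j - 2) s.root.2 := by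
              intro i h1 him
              rw [heq, heq]
              exact hzc' i h1 him
            have hBs := ih s hhts hvc' (covT_node1 hcc) hq' hZs
            have hWs : Wv j s.root.2 = Wv j c.2 := by unfold Wv; rw [heq, heq]
            calc 2 ^ (tower (j - 1) - (Wv j t.root.2 + 1))
                ≤ 2 ^ (tower (j - 1) - Wv j s.root.2) := by
                  exact Nat.pow_le_pow_right (by norm_num) (by omega)
              _ ≤ s.root.2 (Sum.inl j) := hBs
              _ = c.2 (Sum.inl j) := heq _
          · -- escape
            subst hueq
            have e1 := hu (Sum.inl (j - 1))
            simp only [Pi.neg_apply, e_apply, Sum.inl.injEq] at e1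
            rw [if_neg (by omega)] at e1
            have hZs : Zv (j - 2) s.root.2 :=
              Zv_unary ⟨_, by rw [hqc']; exact hmem, hu⟩
                (by rw [hqc']; show j - 2 + 2 ≤ j; omega) hzc'
            rcases Nat.lt_or_ge (Wv j t.root.2 + 1) (tower (j - 1)) with hlt | hge
            · exfalso
              refine NE s hvc' (covT_node1 hcc) hq' hZs ?_
              have hle : c.2 (Sum.inl (j - 1)) ≤ Wv j c.2 := Nat.le_add_right _ _
              omega
            · have h0 : tower (j - 1) - (Wv j t.root.2 + 1) = 0 := by omega
              rw [h0, pow_zero]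
              have e2 := hu (Sum.inl j)
              simp only [Pi.neg_apply, e_apply, if_true] at e2
              omega
      have k1 := key a ta hsa hqa hwa hza
      have k2 := key b tb hsb hqb hwb hzb
      have hsum := sum_inlj (K := K) (j := j) a b t ta tb hv
        (by rw [hst]; exact le_rfl) hinc hsa hsb
      have hexp : tower (j - 1) - Wv j t.root.2 = (tower (j - 1) - (Wv j t.root.2 + 1)) + 1 := by
        omega
      rw [hexp, pow_succ]
      omega

lemma NE_all {K : ℕ} : ∀ j, 1 ≤ j → ∀ t : DTree BSt Cnt,
    IsDeduction (Bsys K) t → covT t →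
    t.root.1 = BSt.qinit j → Zv (j - 1) t.root.2 →
    t.root.2 (Sum.inl j) < tower j → False := by
  intro j
  induction j with
  | zero => omega
  | succ j ihj =>
    intro _ t hv hc hst hZ hB
    rcases Nat.eq_zero_or_pos j with hj0 | hj1
    · -- base level 1
      subst hj0
      cases t with
      | leaf c =>
        have hlf : c.1 = BSt.qleaf := hc c (by simp [DTree.leaves])
        have h' : c.1 = BSt.qinit 1 := hst
        rw [hlf] at h'; simp at h'
      | node2 c s₁ s₂ =>
        cases hv with | two hstep hv1 hv2 =>
        obtain ⟨hmem, -⟩ := bin_split hstep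
        obtain ⟨j', h2', hqe, -, -⟩ := ts_inv hmem
        have h' : c.1 = BSt.qinit 1 := hst
        rw [h'] at hqe
        simp at hqe
      | node1 c s =>
        cases hv with | one hstep hv' =>
        obtain ⟨u, hmem, hu⟩ := step1_unary hstep
        have hst' : c.1 = BSt.qinit 1 := hst
        rw [hst'] at hmem
        obtain ⟨-, hueq⟩ := tu_qinit1 hmem
        subst hueq
        have h1 := hu (Sum.inl 1)
        simp only [Pi.neg_apply, Pi.smul_apply, Pi.mul_apply, nsmul_eq_mul, Nat.cast_ofNat,
          Pi.ofNat_apply, e_apply, Sum.inl.injEq, if_true, if_pos rfl] at h1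
        have hB' : c.2 (Sum.inl 1) < tower 1 := hB
        have ht1 : tower 1 = 2 := by simp [tower]
        omega
    · -- inductive level j+1 ≥ 2
      have hj2 : 2 ≤ j + 1 := by omega
      have NE' : ∀ s : DTree BSt Cnt, IsDeduction (Bsys K) s → covT s →
          s.root.1 = BSt.qinit (j + 1 - 1) → Zv (j + 1 - 2) s.root.2 →
          s.root.2 (Sum.inl (j + 1 - 1)) < tower (j + 1 - 1) → False := by
        intro s hv' hc' hst' hZ' hB'
        exact ihj hj1 s hv' hc' hst' hZ' hB'
      have hZ2 : Zv (j + 1 - 2) t.root.2 := by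
        intro i h1 him
        exact hZ i h1 (by omega)
      have hbud := budget hj2 NE' t.height t le_rfl hv hc hst hZ2
      have hW : Wv (j + 1) t.root.2 = 0 := by
        obtain ⟨z1, z2⟩ := hZ j hj1 (by omega)
        unfold Wv
        simp only [Nat.add_sub_cancel]
        omega
      rw [hW, Nat.sub_zero] at hbud
      have htow : tower (j + 1) = 2 ^ tower j := rfl
      have hred : j + 1 - 1 = j := rfl
      rw [hred] at hbud
      omega

end Bk
namespace Bk

lemma prefix_cancel : ∀ (p a b : List Bool), (p ++ a) <+: (p ++ b) → a <+: b := by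
  intro p
  induction p with
  | nil => intro a b h; exact h
  | cons x p ih => intro a b h; exact ih a b (List.cons_prefix_cons.1 h).2

lemma ne_append {p a : List Bool} (ha : a ≠ []) : p ≠ p ++ a := by
  intro h
  have := congrArg List.length h
  rw [List.length_append] at this
  exact ha (List.length_eq_zero_iff.mp (by omega))

end Bk
/-- Let `k > 1` and `D` be a `(qinit k, v₀)`-rooted `{qleaf}`-leaf-covering
deduction tree of `B_k`, with `v₀ (d_i) = v₀ (d'_i) = 0` for `1 ≤ i < k`.
Then for each node `n` of `D` with state label `qinit k` at which
`d_{k-1} + d'_{k-1}` has some value `h' < tower (k-1)`, there are two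
incomparable proper descendants of `n` with state label `qloop k` at
which `d_{k-1} + d'_{k-1}` is at most `h' + 1`. -/
theorem Bk_two_descendants (k : ℕ) (hk : 1 < k) (v₀ : Cnt → ℕ)
    (h0 : ∀ i, 1 ≤ i → i < k → v₀ (Sum.inl i) = 0 ∧ v₀ (Sum.inr i) = 0)
    (D : DTree BSt Cnt) (hD : IsDeduction (Bsys k) D)
    (hroot : D.root = (BSt.qinit k, v₀))
    (hcov : ∀ l ∈ D.leaves, l.1 = BSt.qleaf)
    (p : List Bool) (t : DTree BSt Cnt) (ht : subtreeAt D p = some t)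
    (hst : t.root.1 = BSt.qinit k) (h' : ℕ)
    (hval : t.root.2 (Sum.inl (k - 1)) + t.root.2 (Sum.inr (k - 1)) = h')
    (hlt : h' < tower (k - 1)) :
    ∃ (p₁ p₂ : List Bool) (t₁ t₂ : DTree BSt Cnt),
      p <+: p₁ ∧ p ≠ p₁ ∧ p <+: p₂ ∧ p ≠ p₂ ∧ Incomparable p₁ p₂ ∧
      subtreeAt D p₁ = some t₁ ∧ subtreeAt D p₂ = some t₂ ∧
      t₁.root.1 = BSt.qloop k ∧ t₂.root.1 = BSt.qloop k ∧
      t₁.root.2 (Sum.inl (k - 1)) + t₁.root.2 (Sum.inr (k - 1)) ≤ h' + 1 ∧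
      t₂.root.2 (Sum.inl (k - 1)) + t₂.root.2 (Sum.inr (k - 1)) ≤ h' + 1 := by
  have hkk : 2 ≤ k := hk
  have htval : IsDeduction (Bsys k) t := Bk.valid_subtreeAt p D t hD ht
  have htcov : Bk.covT t := fun l hl => hcov l (Bk.mem_leaves_subtreeAt p D t ht l hl)
  have hDv : D.root.2 = v₀ := by rw [hroot]
  have hDZ : Bk.Zv (k - 2) D.root.2 := by
    intro i h1 him
    rw [hDv]
    exact h0 i h1 (by omega)
  have hZt : Bk.Zv (k - 2) t.root.2 := by
    refine Bk.Z_path p D t hD ht ?_ hDZ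
    rw [hst]
    show k - 2 + 2 ≤ k
    omega
  have NE' : ∀ s : DTree BSt Cnt, IsDeduction (Bsys k) s → Bk.covT s →
      s.root.1 = BSt.qinit (k - 1) → Bk.Zv (k - 2) s.root.2 →
      s.root.2 (Sum.inl (k - 1)) < tower (k - 1) → False := by
    intro s hv' hc' hst' hZ' hB'
    refine Bk.NE_all (k - 1) (by omega) s hv' hc' hst' ?_ hB'
    have e : k - 1 - 1 = k - 2 := by omega
    rw [e]
    exact hZ'
  obtain ⟨a, b, ta, tb, hna, hnb, hinc, hsa, hsb, hqa, hqb, hwa, hwb, -, -⟩ :=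
    Bk.inner k hkk NE' t.height t le_rfl htval htcov h' hlt hZt
      (Or.inl ⟨hst, le_of_eq hval⟩)
  refine ⟨p ++ a, p ++ b, ta, tb, List.prefix_append p a, Bk.ne_append hna,
    List.prefix_append p b, Bk.ne_append hnb,
    ⟨fun hh => hinc.1 (Bk.prefix_cancel p a b hh),
     fun hh => hinc.2 (Bk.prefix_cancel p b a hh)⟩, ?_, ?_, hqa, hqb, hwa, hwb⟩
  · rw [Bk.subtreeAt_append, ht]
    exact hsa
  · rw [Bk.subtreeAt_append, ht]
    exact hsb
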